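/- Let u = max_{i∈I} u_i with u_i convex on ℝⁿ, the sets {Ω̄_i} finite, disjoint, compact, with ∇u_i valued in Ω̄_i. Fix indices 1,...,k and suppose for every j ∉ {1,...,k}: whenever ∂u(x) meets Ω̄_1,...,Ω̄_k and Ω̄_j simultaneously, the collection {ch(Ω̄_1),...,ch(Ω̄_k), ch(Ω̄_j)} is affinely independent. Then the set Σ↑_{1..k} ∩ M_k of points where u = u_1 = ⋯ = u_k and the multiplicity is exactly k equals {x : u(x) = u_1(x) = ⋯ = u_k(x) > max_{j>k} u_j(x)}, and this set is relatively open in Σ↑_{1..k} := {x : u(x) = u_i(x), i = 1..k}. -/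

import Mathlib

open Set

noncomputable section

/-- The subdifferential of `f : ℝⁿ → ℝ` at `x`. -/
def subdiff {n : ℕ} (f : EuclideanSpace ℝ (Fin n) → ℝ) (x : EuclideanSpace ℝ (Fin n)) :
    Set (EuclideanSpace ℝ (Fin n)) :=
  {p | ∀ y, f x + inner ℝ p (y - x) ≤ f y}

/-- The multiplicity of `u` at `x` relative to the collection `Ω`: the number of indices `i`
with `∂u(x) ∩ Ω i ≠ ∅`. -/
def mult {n K : ℕ} (u : EuclideanSpace ℝ (Fin n) → ℝ)
    (Ω : Fin K → Set (EuclideanSpace ℝ (Fin n))) (x : EuclideanSpace ℝ (Fin n)) : ℕ :=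
  Set.ncard {i : Fin K | (subdiff u x ∩ Ω i).Nonempty}

open Metric

variable {n : ℕ}

/-- fderiv applied equals inner with gradient. -/
lemma grad_inner {f : EuclideanSpace ℝ (Fin n) → ℝ} {y v : EuclideanSpace ℝ (Fin n)} :
    (inner ℝ (gradient f y) v : ℝ) = fderiv ℝ f y v := by
  rw [gradient]
  rw [← InnerProductSpace.toDual_apply_apply]
  simp

/-- Gradient inequality for convex functions at differentiability points. -/
lemma grad_ineq {f : EuclideanSpace ℝ (Fin n) → ℝ} (hf : ConvexOn ℝ univ f)
    {y : EuclideanSpace ℝ (Fin n)} (hd : DifferentiableAt ℝ f y)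
    (z : EuclideanSpace ℝ (Fin n)) :
    f y + inner ℝ (gradient f y) (z - y) ≤ f z := by
  set v := z - y with hv
  -- the curve t ↦ y + t • v
  have hc : HasDerivAt (fun t : ℝ => y + t • v) v 0 := by
    simpa using ((hasDerivAt_id (0:ℝ)).smul_const v).const_add y
  have hg : HasDerivAt (fun t : ℝ => f (y + t • v)) (fderiv ℝ f y v) 0 := by
    have h0 : y + (0:ℝ) • v = y := by simp
    have hfd : HasFDerivAt f (fderiv ℝ f y) (y + (0:ℝ) • v) := by rw [h0]; exact hd.hasFDerivAt
    have := hfd.comp_hasDerivAt (0:ℝ) hc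
    exact this
  -- slope bound on (0, 1]
  have hslope : ∀ t : ℝ, t ∈ Set.Ioc (0:ℝ) 1 → (f (y + t • v) - f y) / t ≤ f z - f y := by
    intro t ht
    have h1 : y + t • v = (1 - t) • y + t • z := by
      rw [hv]; module
    have h2 : f ((1 - t) • y + t • z) ≤ (1 - t) * f y + t * f z := by
      have := hf.2 (mem_univ y) (mem_univ z) (by linarith [ht.2] : (0:ℝ) ≤ 1 - t)
        (le_of_lt ht.1) (by ring)
      simpa [smul_eq_mul] using this
    rw [div_le_iff₀ ht.1]
    rw [h1]
    nlinarith [h2]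
  -- derivative is limit of slopes from the right
  have htends : Filter.Tendsto (fun t : ℝ => (f (y + t • v) - f y) / t)
      (nhdsWithin 0 (Set.Ioi 0)) (nhds (fderiv ℝ f y v)) := by
    have := hasDerivAt_iff_tendsto_slope.1 hg
    have h2 := this.mono_left (nhdsWithin_mono (0:ℝ) (fun t ht => Set.mem_compl_singleton_iff.2 (ne_of_gt ht)))
    apply h2.congr
    intro t
    simp [slope_def_field, div_eq_inv_mul]
  have hle : fderiv ℝ f y v ≤ f z - f y := by
    refine le_of_tendsto htends ?_
    filter_upwards [Ioc_mem_nhdsGT_of_mem (by norm_num : (0:ℝ) ∈ Set.Ico (0:ℝ) 1)] with t ht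
    exact hslope t ht
  have := grad_inner (f := f) (y := y) (v := v)
  linarith [this, hle]

open MeasureTheory in
/-- Near any point there is a point where finitely many locally Lipschitz functions are all
differentiable. -/
lemma dense_diff {m : ℕ} (g : Fin m → EuclideanSpace ℝ (Fin n) → ℝ)
    (hg : ∀ i, LocallyLipschitz (g i)) (x : EuclideanSpace ℝ (Fin n)) {r : ℝ} (hr : 0 < r) :
    ∃ y, dist y x < r ∧ ∀ i, DifferentiableAt ℝ (g i) y := by
  -- choose a ball on which all functions are Lipschitz
  have h1 : ∀ i : Fin m, ∃ K : NNReal, ∃ t ∈ nhds x, LipschitzOnWith K (g i) t := fun i => hg i x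
  choose Kf tf htf hlip using h1
  have hint : (⋂ i, tf i) ∈ nhds x := Filter.iInter_mem.2 htf
  obtain ⟨ε₀, hε₀, hball⟩ := Metric.mem_nhds_iff.1 hint
  set ε := min ε₀ r with hε
  have hεpos : 0 < ε := lt_min hε₀ hr
  have hsub : ball x ε ⊆ ⋂ i, tf i := fun y hy => hball (ball_subset_ball (min_le_left _ _) hy)
  -- Rademacher on the ball
  have hae : ∀ᵐ y ∂(volume : Measure (EuclideanSpace ℝ (Fin n))),
      y ∈ ball x ε → ∀ i, DifferentiableAt ℝ (g i) y := by
    have : ∀ i : Fin m, ∀ᵐ y ∂(volume : Measure (EuclideanSpace ℝ (Fin n))),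
        y ∈ ball x ε → DifferentiableAt ℝ (g i) y := by
      intro i
      have hlip' : LipschitzOnWith (Kf i) (g i) (ball x ε) :=
        (hlip i).mono (fun y hy => by have := hsub hy; exact Set.mem_iInter.1 this i)
      filter_upwards [hlip'.ae_differentiableWithinAt_of_mem] with y hy hmem
      exact (hy hmem).differentiableAt (isOpen_ball.mem_nhds hmem)
    filter_upwards [MeasureTheory.ae_all_iff.2 this] with y hy hmem i
    exact hy i hmem
  -- the ball has positive measure
  have hpos : 0 < (volume : Measure (EuclideanSpace ℝ (Fin n))) (ball x ε) :=
    measure_ball_pos (volume : MeasureTheory.Measure (EuclideanSpace ℝ (Fin n))) x hεpos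
  -- find a point
  by_contra hcon
  push_neg at hcon
  have : ball x ε ⊆ {y | ¬ (y ∈ ball x ε → ∀ i, DifferentiableAt ℝ (g i) y)} := by
    intro y hy
    simp only [Set.mem_setOf_eq]
    intro h
    obtain ⟨i, hi⟩ := hcon y (lt_of_lt_of_le (mem_ball.1 hy) (min_le_right _ _))
    exact hi (h hy i)
  have hnull := (MeasureTheory.ae_iff.1 hae)
  have hle : (volume : MeasureTheory.Measure (EuclideanSpace ℝ (Fin n))) (ball x ε)
      ≤ (volume : MeasureTheory.Measure (EuclideanSpace ℝ (Fin n)))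
        {y | ¬ (y ∈ ball x ε → ∀ i, DifferentiableAt ℝ (g i) y)} := measure_mono this
  exact absurd (le_antisymm (le_trans hle (le_of_eq hnull)) zero_le) (ne_of_gt hpos)

/-- Existence of a subgradient in `Ω` (claim A). -/
lemma subgrad_exists {f : EuclideanSpace ℝ (Fin n) → ℝ} (hf : ConvexOn ℝ univ f)
    {Ω : Set (EuclideanSpace ℝ (Fin n))} (hΩ : IsCompact Ω)
    (hgrad : ∀ y, DifferentiableAt ℝ f y → gradient f y ∈ Ω)
    (x : EuclideanSpace ℝ (Fin n)) :
    ∃ q ∈ Ω, ∀ z, f x + inner ℝ q (z - x) ≤ f z := by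
  have hll : LocallyLipschitz f := hf.locallyLipschitz
  have hsel : ∀ m : ℕ, ∃ y, dist y x < 1 / (m + 1) ∧ DifferentiableAt ℝ f y := by
    intro m
    obtain ⟨y, hy, hd⟩ := dense_diff (fun _ : Fin 1 => f) (fun _ => hll) x
      (by positivity : (0:ℝ) < 1 / (m + 1))
    exact ⟨y, hy, hd 0⟩
  choose yseq hyd hydiff using hsel
  have hy_tendsto : Filter.Tendsto yseq Filter.atTop (nhds x) := by
    rw [tendsto_iff_dist_tendsto_zero]
    refine squeeze_zero (fun m => dist_nonneg) (fun m => (hyd m).le) ?_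
    exact tendsto_one_div_add_atTop_nhds_zero_nat
  set qseq := fun m => gradient f (yseq m) with hq
  have hqmem : ∀ m, qseq m ∈ Ω := fun m => hgrad _ (hydiff m)
  obtain ⟨q, hqΩ, φ, hφ, hqt⟩ := hΩ.tendsto_subseq hqmem
  refine ⟨q, hqΩ, fun z => ?_⟩
  have hineq : ∀ m : ℕ, f (yseq (φ m)) + inner ℝ (qseq (φ m)) (z - yseq (φ m)) ≤ f z :=
    fun m => grad_ineq hf (hydiff (φ m)) z
  have hyφ : Filter.Tendsto (yseq ∘ φ) Filter.atTop (nhds x) :=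
    hy_tendsto.comp hφ.tendsto_atTop
  have hcont : Filter.Tendsto (fun m => f (yseq (φ m)) + inner ℝ (qseq (φ m)) (z - yseq (φ m)))
      Filter.atTop (nhds (f x + inner ℝ q (z - x))) := by
    have h1 : Filter.Tendsto (fun m => f (yseq (φ m))) Filter.atTop (nhds (f x)) :=
      (hll.continuous.tendsto x).comp hyφ
    have h2 : Filter.Tendsto (fun m => (inner ℝ (qseq (φ m)) (z - yseq (φ m)) : ℝ))
        Filter.atTop (nhds (inner ℝ q (z - x))) :=
      Filter.Tendsto.inner hqt (tendsto_const_nhds.sub hyφ)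
    exact h1.add h2
  exact le_of_tendsto hcont (Filter.Eventually.of_forall hineq)

/-- Convex hull of a compact set in Euclidean space is compact. -/
lemma isCompact_convexHull_euclidean {s : Set (EuclideanSpace ℝ (Fin n))} (hs : IsCompact s) :
    IsCompact (convexHull ℝ s) := by
  rcases s.eq_empty_or_nonempty with rfl | ⟨z₀, hz₀⟩
  · simpa using isCompact_empty
  set m := n + 1 with hm
  set T : Set ((Fin m → ℝ) × (Fin m → EuclideanSpace ℝ (Fin n))) :=
    (stdSimplex ℝ (Fin m)) ×ˢ (Set.pi univ (fun _ => s)) with hT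
  have hTcomp : IsCompact T := (isCompact_stdSimplex ℝ _).prod (isCompact_univ_pi fun _ => hs)
  set F : ((Fin m → ℝ) × (Fin m → EuclideanSpace ℝ (Fin n))) → EuclideanSpace ℝ (Fin n) :=
    fun wz => ∑ j : Fin m, wz.1 j • wz.2 j with hF
  have hFcont : Continuous F := by
    apply continuous_finset_sum
    intro j _
    exact ((continuous_apply j).comp continuous_fst).smul
      ((continuous_apply j).comp continuous_snd)
  have himage : F '' T = convexHull ℝ s := by
    apply Set.Subset.antisymm
    · rintro _ ⟨⟨w, z⟩, ⟨hw, hz⟩, rfl⟩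
      exact (convex_convexHull ℝ s).sum_mem (fun j _ => hw.1 j) hw.2
        (fun j _ => subset_convexHull ℝ s (hz j (Set.mem_univ j)))
    · intro q hq
      obtain ⟨ι, hι, z, w, hzs, hai, hwpos, hwsum, hwq⟩ :=
        eq_pos_convex_span_of_mem_convexHull hq
      have hcard : Fintype.card ι ≤ m := by
        have h1 := hai.card_le_finrank_succ
        have h2 : Module.finrank ℝ (vectorSpan ℝ (Set.range z)) ≤ n := by
          have := Submodule.finrank_le (vectorSpan ℝ (Set.range z))
          simpa [finrank_euclideanSpace_fin] using this
        omega
      obtain ⟨e⟩ : Nonempty (ι ↪ Fin m) := by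
        apply Function.Embedding.nonempty_of_card_le
        simpa using hcard
      classical
      set w' : Fin m → ℝ := Function.extend e w 0 with hw'
      set z' : Fin m → EuclideanSpace ℝ (Fin n) := Function.extend e z (fun _ => z₀) with hz'
      have hsum_ext : ∀ (G : (Fin m → ℝ) → (Fin m → EuclideanSpace ℝ (Fin n)) → Prop), True :=
        fun _ => trivial
      have key : ∀ {β : Type} [inst : AddCommMonoid β] (φ : ℝ → EuclideanSpace ℝ (Fin n) → β)
          (hφ : ∀ v, φ 0 v = 0), ∑ j : Fin m, φ (w' j) (z' j) = ∑ i : ι, φ (w i) (z i) := by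
        intro β inst φ hφ
        have h0 : ∀ j : Fin m, j ∉ Finset.univ.image e → φ (w' j) (z' j) = 0 := by
          intro j hj
          have : ¬ ∃ i, e i = j := by
            intro ⟨i, hi⟩; exact hj (Finset.mem_image.2 ⟨i, Finset.mem_univ i, hi⟩)
          rw [hw', Function.extend_apply' _ _ _ this]
          exact hφ _
        rw [← Finset.sum_subset (Finset.subset_univ (Finset.univ.image e)) (fun j _ hj => h0 j hj)]
        rw [Finset.sum_image (fun a _ b _ h => e.injective h)]
        apply Finset.sum_congr rfl
        intro i _
        rw [hw', hz', e.injective.extend_apply, e.injective.extend_apply]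
      refine ⟨⟨w', z'⟩, ⟨⟨fun j => ?_, ?_⟩, fun j _ => ?_⟩, ?_⟩
      · -- nonneg
        show 0 ≤ w' j
        rcases em (∃ i, e i = j) with ⟨i, rfl⟩ | hj
        · rw [hw', e.injective.extend_apply]; exact (hwpos i).le
        · rw [hw', Function.extend_apply' _ _ _ hj]; rfl
      · -- sum one
        show ∑ j : Fin m, w' j = 1
        have : ∑ j : Fin m, w' j = ∑ j : Fin m, (fun (a : ℝ) (_ : EuclideanSpace ℝ (Fin n)) => a) (w' j) (z' j) := rfl
        rw [this, key (fun a _ => a) (fun _ => rfl), hwsum]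
      · -- z' j ∈ s
        show z' j ∈ s
        rcases em (∃ i, e i = j) with ⟨i, rfl⟩ | hj
        · rw [hz', e.injective.extend_apply]; exact hzs (Set.mem_range_self i)
        · rw [hz', Function.extend_apply' _ _ _ hj]; exact hz₀
      · -- sum equals q
        have := key (fun a v => a • v) (fun v => zero_smul ℝ v)
        rw [hF]; simpa [this] using hwq
  rw [← himage]
  exact hTcomp.image hFcont

section sup

variable {K : ℕ} (uu : Fin K → EuclideanSpace ℝ (Fin n) → ℝ)
  (u : EuclideanSpace ℝ (Fin n) → ℝ)

lemma usup_le (hK : 0 < K) (hu : ∀ x, u x = ⨆ i, uu i x) (i : Fin K)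
    (x : EuclideanSpace ℝ (Fin n)) : uu i x ≤ u x := by
  rw [hu]
  exact le_ciSup (f := fun i => uu i x) (Set.finite_range _).bddAbove i

lemma usup_attain (hK : 0 < K) (hu : ∀ x, u x = ⨆ i, uu i x) (x : EuclideanSpace ℝ (Fin n)) :
    ∃ i, u x = uu i x := by
  haveI : Nonempty (Fin K) := ⟨⟨0, hK⟩⟩
  obtain ⟨i₀, hi₀⟩ := Finite.exists_max (fun i => uu i x)
  exact ⟨i₀, le_antisymm (by rw [hu]; exact ciSup_le hi₀) (usup_le uu u hK hu i₀ x)⟩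

lemma usup_convex (hK : 0 < K) (hconv : ∀ i, ConvexOn ℝ univ (uu i))
    (hu : ∀ x, u x = ⨆ i, uu i x) : ConvexOn ℝ univ u := by
  haveI : Nonempty (Fin K) := ⟨⟨0, hK⟩⟩
  refine ⟨convex_univ, fun x _ y _ a b ha hb hab => ?_⟩
  rw [hu]
  refine ciSup_le fun i => ?_
  show uu i (a • x + b • y) ≤ a * u x + b * u y
  calc uu i (a • x + b • y) ≤ a * uu i x + b * uu i y := by
        simpa [smul_eq_mul] using (hconv i).2 (mem_univ x) (mem_univ y) ha hb hab
    _ ≤ a * u x + b * u y := by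
        have h1 := usup_le uu u hK hu i x
        have h2 := usup_le uu u hK hu i y
        have h3 := mul_le_mul_of_nonneg_left h1 ha
        have h4 := mul_le_mul_of_nonneg_left h2 hb
        linarith

end sup

/-- The envelope bound: any subgradient of `u` at `x` lies in the convex hull of the union of
the `Ω i` over the "active" index set `S`. -/
lemma envelope {K : ℕ} (hK : 0 < K) (uu : Fin K → EuclideanSpace ℝ (Fin n) → ℝ)
    (hconv : ∀ i, ConvexOn ℝ univ (uu i)) (Ω : Fin K → Set (EuclideanSpace ℝ (Fin n)))
    (hcomp : ∀ i, IsCompact (Ω i))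
    (hgrad : ∀ i y, DifferentiableAt ℝ (uu i) y → gradient (uu i) y ∈ Ω i)
    (u : EuclideanSpace ℝ (Fin n) → ℝ) (hu : ∀ x, u x = ⨆ i, uu i x)
    (S : Finset (Fin K)) (x : EuclideanSpace ℝ (Fin n))
    (hS : ∀ j, j ∉ S → uu j x < u x)
    {p : EuclideanSpace ℝ (Fin n)} (hp : ∀ z, u x + inner ℝ p (z - x) ≤ u z) :
    p ∈ convexHull ℝ (⋃ i ∈ (S : Set (Fin K)), Ω i) := by
  classical
  have hcu : ConvexOn ℝ univ u := usup_convex uu u hK hconv hu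
  have hllu : LocallyLipschitz u := hcu.locallyLipschitz
  have hlli : ∀ i, LocallyLipschitz (uu i) := fun i => (hconv i).locallyLipschitz
  set U : Set (EuclideanSpace ℝ (Fin n)) := ⋃ i ∈ (S : Set (Fin K)), Ω i with hU
  have hUcomp : IsCompact U := S.finite_toSet.isCompact_biUnion (fun i _ => hcomp i)
  set C := convexHull ℝ U with hC
  have hCcomp : IsCompact C := isCompact_convexHull_euclidean hUcomp
  by_contra hpC
  obtain ⟨l, c, hlc, hcp⟩ :=
    geometric_hahn_banach_closed_point (convex_convexHull ℝ U) hCcomp.isClosed hpC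
  set v := (InnerProductSpace.toDual ℝ (EuclideanSpace ℝ (Fin n))).symm l with hvdef
  have hv : ∀ w, (inner ℝ v w : ℝ) = l w := fun w => by
    rw [hvdef, ← InnerProductSpace.toDual_apply_apply, LinearIsometryEquiv.apply_symm_apply]
  obtain ⟨M, hM⟩ := isBounded_iff_forall_norm_le.1 hCcomp.isBounded
  set M' := max M 0 with hM'
  have hMn : ∀ q ∈ C, ‖q‖ ≤ M' := fun q hq => (hM q hq).trans (le_max_left _ _)
  set ε := l p - c with hε
  have hεpos : 0 < ε := by simp [hε]; linarith
  -- a ball on which the inactive functions stay below u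
  have hev : ∀ᶠ y in nhds x, ∀ j, j ∉ S → uu j y < u y := by
    rw [Filter.eventually_all]
    intro j
    by_cases hjS : j ∈ S
    · exact Filter.Eventually.of_forall fun y h => absurd hjS h
    · have hcj : ContinuousAt (uu j) x := (hlli j).continuous.continuousAt
      have hcux : ContinuousAt u x := hllu.continuous.continuousAt
      filter_upwards [hcj.eventually_lt hcux (hS j hjS)] with y hy
      exact fun _ => hy
  obtain ⟨r, hrpos, hball⟩ := Metric.eventually_nhds_iff.1 hev
  -- parameters
  set t := r / (2 * (‖v‖ + 1)) with ht
  have htpos : 0 < t := by positivity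
  set δ := min (t * (ε / 2) / (M' + ‖p‖ + 1)) (r / 4) with hδ
  have hMp : (0:ℝ) < M' + ‖p‖ + 1 := by positivity
  have hδpos : 0 < δ := by
    apply lt_min
    · positivity
    · positivity
  -- a good differentiability point near x + t • v
  obtain ⟨y, hyd, hydiff⟩ := dense_diff (Fin.cons u uu) (fun i => Fin.cases hllu hlli i)
    (x + t • v) hδpos
  have hdu : DifferentiableAt ℝ u y := by simpa using hydiff 0
  have hdi : ∀ i, DifferentiableAt ℝ (uu i) y := fun i => by simpa using hydiff i.succ
  have hyx : dist y x < r := by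
    have h1 : dist y x ≤ dist y (x + t • v) + dist (x + t • v) x := dist_triangle _ _ _
    have h2 : dist (x + t • v) x = t * ‖v‖ := by
      rw [dist_eq_norm]
      simp [norm_smul, abs_of_pos htpos]
    have h3 : t * ‖v‖ ≤ r / 2 := by
      rw [ht, div_mul_eq_mul_div, div_le_div_iff₀ (by positivity) (by norm_num)]
      nlinarith [norm_nonneg v, hrpos]
    have h4 : δ ≤ r / 4 := min_le_right _ _
    linarith
  -- the maximum at y is attained at an active index
  obtain ⟨i₀, hi₀⟩ := usup_attain uu u hK hu y
  have hi₀S : i₀ ∈ S := by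
    by_contra hi₀S
    exact absurd hi₀ (ne_of_gt (hball hyx i₀ hi₀S))
  -- gradients of u and uu i₀ agree at y
  have hgradeq : gradient u y = gradient (uu i₀) y := by
    have hmin : IsLocalMin (fun z => u z - uu i₀ z) y :=
      Filter.Eventually.of_forall fun z => by
        have := usup_le uu u hK hu i₀ z
        simp only [hi₀]
        linarith
    have hfz := hmin.fderiv_eq_zero
    have hsub : fderiv ℝ (fun z => u z - uu i₀ z) y = fderiv ℝ u y - fderiv ℝ (uu i₀) y :=
      fderiv_sub hdu (hdi i₀)
    have : fderiv ℝ u y = fderiv ℝ (uu i₀) y := by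
      rw [hsub] at hfz
      exact sub_eq_zero.1 hfz
    rw [gradient, gradient, this]
  set g₀ := gradient u y with hg₀
  have hg₀C : g₀ ∈ C := by
    apply subset_convexHull ℝ U
    rw [hU]
    refine Set.mem_biUnion hi₀S ?_
    show g₀ ∈ Ω i₀
    rw [hgradeq]
    exact hgrad i₀ y (hdi i₀)
  -- the two subgradient inequalities
  have h1 : u y + inner ℝ g₀ (x - y) ≤ u x := grad_ineq hcu hdu x
  have h2 : u x + inner ℝ p (y - x) ≤ u y := hp y
  have hxy : x - y = -(y - x) := by abel
  have key : (inner ℝ p (y - x) : ℝ) ≤ inner ℝ g₀ (y - x) := by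
    rw [hxy, inner_neg_right] at h1
    linarith
  -- decompose y - x
  set e := y - (x + t • v) with he
  have henorm : ‖e‖ < δ := by rw [he, ← dist_eq_norm]; exact hyd
  have hyx2 : y - x = t • v + e := by rw [he]; abel
  have hinner : ∀ w : EuclideanSpace ℝ (Fin n),
      (inner ℝ w (y - x) : ℝ) = t * inner ℝ w v + inner ℝ w e := by
    intro w
    rw [hyx2, inner_add_right, real_inner_smul_right]
  rw [hinner, hinner] at key
  -- bound the error terms
  have hbound : |(inner ℝ (g₀ - p) e : ℝ)| ≤ (M' + ‖p‖) * δ := by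
    calc |(inner ℝ (g₀ - p) e : ℝ)| ≤ ‖g₀ - p‖ * ‖e‖ := abs_real_inner_le_norm _ _
      _ ≤ (M' + ‖p‖) * δ := by
          have h7 : ‖g₀ - p‖ ≤ M' + ‖p‖ :=
            (norm_sub_le _ _).trans (by linarith [hMn g₀ hg₀C])
          exact mul_le_mul h7 henorm.le (norm_nonneg _) (by positivity)
  have hδ1 : δ ≤ t * (ε / 2) / (M' + ‖p‖ + 1) := min_le_left _ _
  have hδbound : (M' + ‖p‖) * δ ≤ t * (ε / 2) := by
    have h5 : (M' + ‖p‖) * δ ≤ (M' + ‖p‖ + 1) * δ := by nlinarith [hδpos.le]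
    have h6 : (M' + ‖p‖ + 1) * δ ≤ (M' + ‖p‖ + 1) * (t * (ε / 2) / (M' + ‖p‖ + 1)) :=
      mul_le_mul_of_nonneg_left hδ1 (by positivity)
    rw [mul_div_cancel₀ _ (ne_of_gt hMp)] at h6
    linarith
  -- conclude
  have hie : (inner ℝ (g₀ - p) e : ℝ) = inner ℝ g₀ e - inner ℝ p e := inner_sub_left _ _ _
  have habs := abs_le.1 hbound
  have hstep : t * (inner ℝ g₀ v : ℝ) ≥ t * inner ℝ p v - t * (ε / 2) := by
    have := habs.1
    rw [hie] at this
    linarith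
  have hfinal : (inner ℝ g₀ v : ℝ) ≥ inner ℝ p v - ε / 2 := by
    have := (mul_le_mul_iff_of_pos_left htpos).1 (by linarith : t * (inner ℝ p v - ε / 2) ≤ t * inner ℝ g₀ v)
    linarith
  have hlg : l g₀ < c := hlc g₀ hg₀C
  have hlg' : l g₀ = inner ℝ g₀ v := by rw [← hv g₀, real_inner_comm]
  have hlp : l p = (inner ℝ p v : ℝ) := by rw [← hv p, real_inner_comm]
  rw [hlg'] at hlg
  rw [hlp] at hε
  simp only [hε] at hεpos hfinal ⊢
  linarith

/-- Decomposition of a point of the convex hull of a finite union as a convex combination of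
points of the individual hulls. -/
lemma mem_convexHull_iUnion_decomp {k : ℕ} (A : Fin k → Set (EuclideanSpace ℝ (Fin n)))
    (hne : ∀ i, (A i).Nonempty) {q : EuclideanSpace ℝ (Fin n)}
    (hq : q ∈ convexHull ℝ (⋃ i, A i)) :
    ∃ (lam : Fin k → ℝ) (r : Fin k → EuclideanSpace ℝ (Fin n)),
      (∀ i, 0 ≤ lam i) ∧ (∑ i, lam i = 1) ∧ (∀ i, r i ∈ convexHull ℝ (A i)) ∧
        ∑ i, lam i • r i = q := by
  classical
  set D : Set (EuclideanSpace ℝ (Fin n)) :=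
    {z | ∃ (lam : Fin k → ℝ) (r : Fin k → EuclideanSpace ℝ (Fin n)),
      (∀ i, 0 ≤ lam i) ∧ (∑ i, lam i = 1) ∧ (∀ i, r i ∈ convexHull ℝ (A i)) ∧
        ∑ i, lam i • r i = z} with hD
  suffices hsub : convexHull ℝ (⋃ i, A i) ⊆ D from hsub hq
  apply convexHull_min
  · -- each A i is contained in D
    rintro z hz
    rw [Set.mem_iUnion] at hz
    obtain ⟨i, hi⟩ := hz
    refine ⟨fun i' => if i' = i then 1 else 0,
      fun i' => if i' = i then z else (hne i').some, fun i' => by positivity, ?_, fun i' => ?_, ?_⟩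
    · simp
    · by_cases h : i' = i
      · simp only [h, if_pos rfl]
        exact subset_convexHull ℝ _ (h ▸ hi)
      · simp only [if_neg h]
        exact subset_convexHull ℝ _ (hne i').some_mem
    · rw [Finset.sum_eq_single i]
      · simp
      · intro b _ hb; simp [hb]
      · intro h; exact absurd (Finset.mem_univ i) h
  · -- D is convex
    rintro z1 ⟨lam, r, hlam, hlam1, hr, hrz⟩ z2 ⟨mu, s, hmu, hmu1, hs, hsz⟩ a b ha hb hab
    set nu : Fin k → ℝ := fun i => a * lam i + b * mu i with hnu
    have hnun : ∀ i, 0 ≤ nu i := fun i => by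
      have := hlam i; have := hmu i; positivity
    set rho : Fin k → EuclideanSpace ℝ (Fin n) := fun i =>
      if h : nu i = 0 then r i else (a * lam i / nu i) • r i + (b * mu i / nu i) • s i with hrho
    refine ⟨nu, rho, hnun, ?_, ?_, ?_⟩
    · rw [hnu]
      rw [Finset.sum_add_distrib, ← Finset.mul_sum, ← Finset.mul_sum, hlam1, hmu1]
      simp [hab]
    · intro i
      rw [hrho]
      by_cases h : nu i = 0
      · simp only [dif_pos h]; exact hr i
      · simp only [dif_neg h]
        have hnupos : 0 < nu i := lt_of_le_of_ne (hnun i) (Ne.symm h)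
        refine (convex_convexHull ℝ (A i)) (hr i) (hs i)
          (div_nonneg (mul_nonneg ha (hlam i)) hnupos.le)
          (div_nonneg (mul_nonneg hb (hmu i)) hnupos.le) ?_
        rw [← add_div, div_eq_one_iff_eq h]
    · have hterm : ∀ i, nu i • rho i = (a * lam i) • r i + (b * mu i) • s i := by
        intro i
        rw [hrho]
        by_cases h : nu i = 0
        · have h' : a * lam i + b * mu i = 0 := h
          have ha1 : 0 ≤ a * lam i := mul_nonneg ha (hlam i)
          have hb1 : 0 ≤ b * mu i := mul_nonneg hb (hmu i)
          have h1 : a * lam i = 0 := by linarith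
          have h2 : b * mu i = 0 := by linarith
          simp [dif_pos h, h, h1, h2]
        · simp only [dif_neg h]
          rw [smul_add, smul_smul, smul_smul, mul_div_cancel₀ _ h, mul_div_cancel₀ _ h]
      calc ∑ i, nu i • rho i = ∑ i, ((a * lam i) • r i + (b * mu i) • s i) := by
            exact Finset.sum_congr rfl fun i _ => hterm i
        _ = a • z1 + b • z2 := by
            rw [Finset.sum_add_distrib, ← hrz, ← hsz, Finset.smul_sum, Finset.smul_sum]
            congr 1 <;> exact Finset.sum_congr rfl fun i _ => by rw [smul_smul]

/-- Points of multiplicity exactly `k` in the tear `Σ↑_{1..k}`: under the additional affine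
independence assumption, `Σ↑_{1..k} ∩ M_k` equals the set where `u = u₁ = ⋯ = u_k` while all
the remaining `uⱼ` are strictly smaller, and this set is relatively open in `Σ↑_{1..k}`. -/
theorem multiplicity_k_tear (n K k : ℕ) (hkK : k ≤ K) (hk : 1 ≤ k)
    (uu : Fin K → EuclideanSpace ℝ (Fin n) → ℝ)
    (Ω : Fin K → Set (EuclideanSpace ℝ (Fin n)))
    (hconv : ∀ i, ConvexOn ℝ univ (uu i))
    (hcomp : ∀ i, IsCompact (Ω i))
    (hdisj : Pairwise (Function.onFun Disjoint Ω))
    (hgrad : ∀ i x, DifferentiableAt ℝ (uu i) x → gradient (uu i) x ∈ Ω i)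
    (u : EuclideanSpace ℝ (Fin n) → ℝ) (hu : ∀ x, u x = ⨆ i, uu i x)
    (hai : ∀ j : Fin K, k ≤ j.1 → ∀ x : EuclideanSpace ℝ (Fin n),
      (∀ i : Fin k, (subdiff u x ∩ Ω (Fin.castLE hkK i)).Nonempty) →
      (subdiff u x ∩ Ω j).Nonempty →
      ∀ p : Fin (k + 1) → EuclideanSpace ℝ (Fin n),
        (∀ i : Fin k, p i.castSucc ∈ convexHull ℝ (Ω (Fin.castLE hkK i))) →
        p (Fin.last k) ∈ convexHull ℝ (Ω j) → AffineIndependent ℝ p) :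
    ({x | ∀ i : Fin k, u x = uu (Fin.castLE hkK i) x} ∩ {x | mult u Ω x = k} =
      {x | (∀ i : Fin k, u x = uu (Fin.castLE hkK i) x) ∧
        ∀ j : Fin K, k ≤ j.1 → uu j x < u x}) ∧
    ∀ x ∈ {x | ∀ i : Fin k, u x = uu (Fin.castLE hkK i) x} ∩ {x | mult u Ω x = k},
      ∃ ε > (0 : ℝ), ∀ y ∈ {x | ∀ i : Fin k, u x = uu (Fin.castLE hkK i) x},
        dist y x < ε → mult u Ω y = k := by
  classical
  have hK : 0 < K := lt_of_lt_of_le hk hkK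
  have hle : ∀ (i : Fin K) x, uu i x ≤ u x := fun i x => usup_le uu u hK hu i x
  have hinj : Function.Injective (Fin.castLE hkK) := Fin.castLE_injective hkK
  have hrange_ncard : (Set.range (Fin.castLE hkK)).ncard = k := by
    rw [← Set.image_univ, Set.ncard_image_of_injective _ hinj, Set.ncard_univ]
    simp
  -- claim A: active indices contribute to the multiplicity
  have claimA : ∀ (x : EuclideanSpace ℝ (Fin n)) (i : Fin K), u x = uu i x →
      (subdiff u x ∩ Ω i).Nonempty := by
    intro x i hxi
    obtain ⟨q, hqΩ, hqsub⟩ := subgrad_exists (hconv i) (hcomp i) (hgrad i) x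
    refine ⟨q, ?_, hqΩ⟩
    intro z
    calc u x + inner ℝ q (z - x) = uu i x + inner ℝ q (z - x) := by rw [hxi]
      _ ≤ uu i z := hqsub z
      _ ≤ u z := hle i z
  -- key: at points of the tear with strict inequalities the active set is exactly the range
  have key1 : ∀ x, (∀ i : Fin k, u x = uu (Fin.castLE hkK i) x) →
      (∀ j : Fin K, k ≤ j.1 → uu j x < u x) →
      {i : Fin K | (subdiff u x ∩ Ω i).Nonempty} = Set.range (Fin.castLE hkK) := by
    intro x hsig hstrict
    apply Set.Subset.antisymm
    · intro i hi
      simp only [Set.mem_setOf_eq] at hi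
      by_cases hik : i.1 < k
      · exact ⟨⟨i.1, hik⟩, by ext; simp⟩
      · exfalso
        push_neg at hik
        set S : Finset (Fin K) := Finset.image (Fin.castLE hkK) Finset.univ with hSdef
        have hSmem : ∀ j : Fin K, j ∈ S ↔ j.1 < k := by
          intro j
          constructor
          · intro hj
            obtain ⟨i', _, rfl⟩ := Finset.mem_image.1 hj
            exact i'.2
          · intro hj
            exact Finset.mem_image.2 ⟨⟨j.1, hj⟩, Finset.mem_univ _, by ext; simp⟩
        have hstrict' : ∀ j, j ∉ S → uu j x < u x := fun j hj =>
          hstrict j (le_of_not_gt (fun h => hj ((hSmem j).2 h)))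
        obtain ⟨q, hq_sub, hqΩ⟩ := hi
        have hq_mem : q ∈ convexHull ℝ (⋃ j ∈ (S : Set (Fin K)), Ω j) :=
          envelope hK uu hconv Ω hcomp hgrad u hu S x hstrict' (fun z => hq_sub z)
        have hUeq : (⋃ j ∈ (S : Set (Fin K)), Ω j) =
            ⋃ i' : Fin k, Ω (Fin.castLE hkK i') := by
          ext w
          constructor
          · intro hw
            obtain ⟨j, hj, hw⟩ := Set.mem_iUnion₂.1 hw
            obtain ⟨i', _, rfl⟩ := Finset.mem_image.1 (Finset.mem_coe.1 hj)
            exact Set.mem_iUnion.2 ⟨i', hw⟩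
          · intro hw
            obtain ⟨i', hw⟩ := Set.mem_iUnion.1 hw
            exact Set.mem_iUnion₂.2
              ⟨Fin.castLE hkK i', Finset.mem_coe.2 ((hSmem _).2 i'.2), hw⟩
        rw [hUeq] at hq_mem
        have hne : ∀ i' : Fin k, (Ω (Fin.castLE hkK i')).Nonempty := by
          intro i'
          obtain ⟨w, _, hw⟩ := claimA x (Fin.castLE hkK i') (hsig i')
          exact ⟨w, hw⟩
        obtain ⟨lam, rr, hlam, hlam1, hrr, hrrq⟩ :=
          mem_convexHull_iUnion_decomp (fun i' => Ω (Fin.castLE hkK i')) hne hq_mem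
        have hAI := hai i hik x (fun i' => claimA x (Fin.castLE hkK i') (hsig i'))
          ⟨q, hq_sub, hqΩ⟩ (Fin.snoc rr q)
          (fun i' => by rw [Fin.snoc_castSucc]; exact hrr i')
          (by rw [Fin.snoc_last]; exact subset_convexHull ℝ _ hqΩ)
        set w : Fin (k + 1) → ℝ := Fin.snoc lam (-1) with hw
        have hwsum : ∑ ℓ : Fin (k + 1), w ℓ = 0 := by
          rw [Fin.sum_univ_castSucc]
          simp only [hw, Fin.snoc_castSucc, Fin.snoc_last]
          rw [hlam1]; ring
        have hwcomb : ∑ ℓ : Fin (k + 1), w ℓ • (Fin.snoc rr q : Fin (k+1) → _) ℓ = 0 := by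
          rw [Fin.sum_univ_castSucc]
          simp only [hw, Fin.snoc_castSucc, Fin.snoc_last]
          rw [hrrq]
          simp
        have := affineIndependent_iff.1 hAI Finset.univ w (by simpa using hwsum)
          (by simpa using hwcomb) (Fin.last k) (Finset.mem_univ _)
        simp only [hw, Fin.snoc_last] at this
        norm_num at this
    · rintro _ ⟨i', rfl⟩
      exact claimA x _ (hsig i')
  -- strictness from multiplicity k
  have key2 : ∀ x, (∀ i : Fin k, u x = uu (Fin.castLE hkK i) x) → mult u Ω x = k →
      ∀ j : Fin K, k ≤ j.1 → uu j x < u x := by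
    intro x hsig hm j hjk
    rcases lt_or_eq_of_le (hle j x) with h | h
    · exact h
    · exfalso
      have hjmem : (subdiff u x ∩ Ω j).Nonempty := claimA x j h.symm
      have hjnot : j ∉ Set.range (Fin.castLE hkK) := by
        rintro ⟨i', rfl⟩
        have : i'.1 < k := i'.2
        simp only [Fin.coe_castLE] at hjk
        omega
      have hsub : insert j (Set.range (Fin.castLE hkK)) ⊆
          {i : Fin K | (subdiff u x ∩ Ω i).Nonempty} := by
        rintro i (rfl | ⟨i', rfl⟩)
        · exact hjmem
        · exact claimA x _ (hsig i')
      have hcard := Set.ncard_le_ncard hsub (Set.toFinite _)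
      rw [Set.ncard_insert_of_notMem hjnot (Set.toFinite _), hrange_ncard] at hcard
      rw [mult] at hm
      omega
  constructor
  · ext x
    simp only [Set.mem_inter_iff, Set.mem_setOf_eq]
    constructor
    · rintro ⟨hsig, hm⟩
      exact ⟨hsig, key2 x hsig hm⟩
    · rintro ⟨hsig, hstrict⟩
      refine ⟨hsig, ?_⟩
      rw [mult, key1 x hsig hstrict, hrange_ncard]
  · rintro x ⟨hsig, hm⟩
    have hstrict := key2 x hsig hm
    have hk0 : 0 < k := hk
    set i₀ : Fin K := Fin.castLE hkK ⟨0, hk0⟩ with hi₀def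
    have hev : ∀ᶠ y in nhds x, ∀ j : Fin K, k ≤ j.1 → uu j y < uu i₀ y := by
      rw [Filter.eventually_all]
      intro j
      by_cases hjk : k ≤ j.1
      · have hcj : ContinuousAt (uu j) x := (hconv j).locallyLipschitz.continuous.continuousAt
        have hci : ContinuousAt (uu i₀) x := (hconv i₀).locallyLipschitz.continuous.continuousAt
        have hlt : uu j x < uu i₀ x := by
          have := hstrict j hjk
          have h2 := hsig ⟨0, hk0⟩
          rw [← hi₀def] at h2
          linarith
        filter_upwards [hcj.eventually_lt hci hlt] with y hy
        exact fun _ => hy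
      · exact Filter.Eventually.of_forall fun y h => absurd h hjk
    obtain ⟨ε, hεpos, hb⟩ := Metric.eventually_nhds_iff.1 hev
    refine ⟨ε, hεpos, fun y hysig hyd => ?_⟩
    have hysig' : ∀ i : Fin k, u y = uu (Fin.castLE hkK i) y := hysig
    have hystrict : ∀ j : Fin K, k ≤ j.1 → uu j y < u y := by
      intro j hjk
      have h1 := hb hyd j hjk
      have h2 := hysig' ⟨0, hk0⟩
      rw [← hi₀def] at h2
      linarith
    rw [mult, key1 y hysig' hystrict, hrange_ncard]
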